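/- For natural numbers a, b, c, d with b ≥ a+d, a ≥ c, the sum over k from 0 to a of C(a,k)·C(b,d+k)·C(k,c)·C(d+k,d)·H(k)·H(b-d-k) equals C(a+b-c-d, a)·C(a,c)·C(b,d)·(H2(b-d) - H2(a+b-c-d) + (H(b-d) - H(a+b-c-d) + H(b-d-c))·(H(b-d) - H(a+b-c-d) + H(a))). -/

import Mathlib

set_option maxRecDepth 4000

noncomputable def H (m : ℕ) : ℚ := ∑ j ∈ Finset.range m, (1 : ℚ) / (j + 1)

noncomputable def H2 (m : ℕ) : ℚ := ∑ j ∈ Finset.range m, (1 : ℚ) / ((j : ℚ) + 1) ^ 2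

lemma H_succ (n : ℕ) : H (n + 1) = H n + 1 / ((n : ℚ) + 1) := by
  simp [H, Finset.sum_range_succ]

lemma H2_succ (n : ℕ) : H2 (n + 1) = H2 n + 1 / ((n : ℚ) + 1) ^ 2 := by
  simp [H2, Finset.sum_range_succ]

lemma alg (q u v w X Y m r N : ℚ) (hm : m ≠ 0) (hr : r ≠ 0) (hN : N ≠ 0)
    (hmr : m + r = N) (hXY : Y * m = X * r) :
    X * (q + (u + v) * (u + w)) + Y * (q + (u + v - 1/r) * (u + w + 1/m)) =
    (X + Y) * (q - 1/N^2 + (u - 1/N + v) * (u - 1/N + w + 1/m)) := by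
  subst hmr
  have hX : X = Y * m / r := by field_simp at hXY ⊢; linarith
  rw [hX]
  field_simp
  ring

lemma key (B : ℕ) (A : ℕ) : ∀ c : ℕ, A + c ≤ B →
    ∑ j ∈ Finset.range (A + 1),
      (A.choose j : ℚ) * B.choose (c + j) * H (c + j) * H (B - c - j) =
    ((A + B).choose (A + c) : ℚ) *
      (H2 B - H2 (A + B) +
        (H B - H (A + B) + H (B - c)) * (H B - H (A + B) + H (A + c))) := by
  induction A with
  | zero =>
    intro c hc
    simp only [Nat.zero_add, Finset.sum_range_one, Nat.choose_zero_right, Nat.cast_one,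
      Nat.add_zero, Nat.sub_zero, one_mul]
    ring
  | succ A ih =>
    intro c hc
    have split : ∀ j : ℕ, ((A+1).choose (j+1) : ℚ) * B.choose (c+(j+1)) * H (c+(j+1)) * H (B - c - (j+1))
        = (A.choose j : ℚ) * B.choose ((c+1)+j) * H ((c+1)+j) * H (B-(c+1)-j)
          + (A.choose (j+1) : ℚ) * B.choose (c+(j+1)) * H (c+(j+1)) * H (B - c - (j+1)) := by
      intro j
      rw [show c + (j+1) = (c+1)+j by omega, show B - c - (j+1) = B - (c+1) - j by omega,
        Nat.choose_succ_succ]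
      push_cast; ring
    have step : ∑ j ∈ Finset.range (A + 1 + 1),
        ((A+1).choose j : ℚ) * B.choose (c + j) * H (c + j) * H (B - c - j)
        = (∑ j ∈ Finset.range (A + 1),
            (A.choose j : ℚ) * B.choose ((c+1) + j) * H ((c+1) + j) * H (B - (c+1) - j))
          + ∑ j ∈ Finset.range (A + 1),
            (A.choose j : ℚ) * B.choose (c + j) * H (c + j) * H (B - c - j) := by
      rw [Finset.sum_range_succ' _ (A+1)]
      rw [Finset.sum_congr rfl (fun j _ => split j), Finset.sum_add_distrib]
      have e2 : ∑ j ∈ Finset.range (A + 1),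
          (A.choose (j+1) : ℚ) * B.choose (c + (j+1)) * H (c + (j+1)) * H (B - c - (j+1))
          + (A.choose 0 : ℚ) * B.choose (c + 0) * H (c + 0) * H (B - c - 0)
          = ∑ j ∈ Finset.range (A + 1 + 1),
            (A.choose j : ℚ) * B.choose (c + j) * H (c + j) * H (B - c - j) :=
        (Finset.sum_range_succ' (fun j => (A.choose j : ℚ) * B.choose (c + j) * H (c + j) * H (B - c - j)) (A+1)).symm
      have e3 : ∑ j ∈ Finset.range (A + 1 + 1),
            (A.choose j : ℚ) * B.choose (c + j) * H (c + j) * H (B - c - j)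
          = ∑ j ∈ Finset.range (A + 1),
            (A.choose j : ℚ) * B.choose (c + j) * H (c + j) * H (B - c - j) := by
        rw [Finset.sum_range_succ, Nat.choose_succ_self]
        push_cast; ring
      rw [← e3, ← e2]
      have e0 : ((A+1).choose 0 : ℚ) * B.choose (c + 0) * H (c + 0) * H (B - c - 0)
          = (A.choose 0 : ℚ) * B.choose (c + 0) * H (c + 0) * H (B - c - 0) := by
        norm_num
      rw [e0]; ring
    rw [step, ih c (by omega), ih (c+1) (by omega)]
    rw [show A + (c+1) = A + c + 1 from rfl]
    have hBc : B - c = (B - (c+1)) + 1 := by omega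
    have hAB1 : A + 1 + B = (A + B) + 1 := by omega
    have hAc1 : A + 1 + c = (A + c) + 1 := by omega
    rw [hBc, hAB1, hAc1, H_succ (A+B), H2_succ (A+B), H_succ (A+c), H_succ (B - (c+1)),
      Nat.choose_succ_succ (A+B) (A+c)]
    have hnrq : ((B - (c+1) : ℕ) : ℚ) = (B:ℚ) - c - 1 := by
      have h := congrArg (Nat.cast : ℕ → ℚ) (show c + 1 + (B - (c+1)) = B by omega)
      push_cast at h
      linarith
    have hXY : ((A+B).choose (A+c+1) : ℚ) * ((A:ℚ) + c + 1) =
        ((A+B).choose (A+c) : ℚ) * (((B - (c+1) : ℕ) : ℚ) + 1) := by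
      have h := congrArg (Nat.cast : ℕ → ℚ) (Nat.choose_succ_right_eq (A+B) (A+c))
      rw [show A + B - (A + c) = (B - (c+1)) + 1 by omega] at h
      push_cast at h
      linarith
    have hm : ((A:ℚ) + c + 1) ≠ 0 := by positivity
    have hr : (((B - (c+1) : ℕ) : ℚ) + 1) ≠ 0 := by positivity
    have hN : ((A:ℚ) + B + 1) ≠ 0 := by positivity
    have hmr : ((A:ℚ) + c + 1) + (((B - (c+1) : ℕ) : ℚ) + 1) = (A:ℚ) + B + 1 := by
      rw [hnrq]; ring
    have halg := alg (H2 B - H2 (A+B)) (H B - H (A+B))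
      (H (B - (c+1)) + 1 / (((B - (c+1) : ℕ) : ℚ) + 1)) (H (A+c))
      ((A+B).choose (A+c) : ℚ) ((A+B).choose (A+c+1) : ℚ)
      ((A:ℚ) + c + 1) (((B - (c+1) : ℕ) : ℚ) + 1) ((A:ℚ) + B + 1)
      hm hr hN hmr hXY
    push_cast at halg ⊢
    linear_combination halg

theorem stmt_15 (a b c d : ℕ) (h1 : b ≥ a + d) (h2 : a ≥ c) :
    ∑ k ∈ Finset.range (a + 1),
      (a.choose k : ℚ) * b.choose (d + k) * k.choose c * (d + k).choose d * H k *
        H (b - d - k) =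
    ((a + b - c - d).choose a : ℚ) * a.choose c * b.choose d *
      (H2 (b - d) - H2 (a + b - c - d) +
        (H (b - d) - H (a + b - c - d) + H (b - d - c)) *
        (H (b - d) - H (a + b - c - d) + H a)) := by
  rw [show a + 1 = c + ((a - c) + 1) by omega, Finset.sum_range_add]
  have hz : ∑ k ∈ Finset.range c,
      (a.choose k : ℚ) * b.choose (d + k) * k.choose c * (d + k).choose d * H k *
        H (b - d - k) = 0 := by
    refine Finset.sum_eq_zero fun k hk => ?_
    rw [Nat.choose_eq_zero_of_lt (Finset.mem_range.mp hk)]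
    push_cast; ring
  rw [hz, zero_add]
  have hsum2 : ∑ j ∈ Finset.range ((a - c) + 1),
      (a.choose (c + j) : ℚ) * b.choose (d + (c + j)) * (c + j).choose c *
        (d + (c + j)).choose d * H (c + j) * H (b - d - (c + j))
      = ∑ j ∈ Finset.range ((a - c) + 1),
        ((a.choose c : ℚ) * b.choose d) *
          (((a - c).choose j : ℚ) * (b - d).choose (c + j) * H (c + j) * H ((b - d) - c - j)) := by
    refine Finset.sum_congr rfl fun j hj => ?_
    have hj' : j ≤ a - c := Nat.lt_succ_iff.mp (Finset.mem_range.mp hj)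
    have h1' := Nat.choose_mul (n := a) (show c ≤ c + j by omega)
    rw [show c + j - c = j by omega] at h1'
    have h2' := Nat.choose_mul (n := b) (show d ≤ d + (c + j) by omega)
    rw [show d + (c + j) - d = c + j by omega] at h2'
    have h1q := congrArg (Nat.cast : ℕ → ℚ) h1'
    have h2q := congrArg (Nat.cast : ℕ → ℚ) h2'
    push_cast at h1q h2q
    rw [show b - d - (c + j) = (b - d) - c - j by omega]
    linear_combination
      ((b.choose (d + (c + j)) : ℚ) * ((d + (c + j)).choose d) * H (c + j) * H ((b - d) - c - j)) * h1q
      + ((a.choose c : ℚ) * ((a - c).choose j) * H (c + j) * H ((b - d) - c - j)) * h2q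
  rw [hsum2, ← Finset.mul_sum, key (b - d) (a - c) c (by omega)]
  rw [show (a - c) + (b - d) = a + b - c - d by omega, show (a - c) + c = a by omega,
    show (b - d) - c = b - d - c from rfl]
  ring
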